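/- Let L be a lattice in ℝ⁶ whose nonzero vectors all have length at least a > 0, let ξ > 0 and M ≥ a². Then ∑_{x ∈ L, ‖x‖² ≥ M} e^{−ξ‖x‖²} ≤ ξ·∫_M^∞ ((2√t/a + 1)⁶ − (2√M/a − 1)⁶)·e^{−ξt} dt. -/

import Mathlib

open MeasureTheory
open Real Set Metric Filter
open scoped ENNReal Topology

open scoped ENNReal

lemma packing_card (L : Submodule ℤ (EuclideanSpace ℝ (Fin 6))) {a M t : ℝ}
    (ha : 0 < a) (hmin : ∀ x ∈ L, x ≠ 0 → a ≤ ‖x‖) (hM : a ^ 2 ≤ M) (ht : M ≤ t)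
    (F : Finset (EuclideanSpace ℝ (Fin 6)))
    (hF : ∀ x ∈ F, x ∈ L ∧ M ≤ ‖x‖ ^ 2 ∧ ‖x‖ ^ 2 ≤ t) :
    (F.card : ℝ) ≤ (2 * Real.sqrt t / a + 1) ^ 6 - (2 * Real.sqrt M / a - 1) ^ 6 := by
  have ha2 : (0:ℝ) < a / 2 := by linarith
  have haM : a ≤ Real.sqrt M := by
    rw [show a = Real.sqrt (a^2) by rw [Real.sqrt_sq ha.le]]
    exact Real.sqrt_le_sqrt hM
  have hMt : Real.sqrt M ≤ Real.sqrt t := Real.sqrt_le_sqrt ht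
  set r₁ : ℝ := Real.sqrt M - a / 2 with hr₁def
  set r₂ : ℝ := Real.sqrt t + a / 2 with hr₂def
  have hr₁0 : 0 ≤ r₁ := by simp only [hr₁def]; linarith
  have hr₂0 : 0 ≤ r₂ := by simp only [hr₂def]; nlinarith [Real.sqrt_nonneg t]
  have hr12 : r₁ ≤ r₂ := by simp only [hr₁def, hr₂def]; linarith
  -- separation
  have hsep : ∀ x ∈ F, ∀ y ∈ F, x ≠ y → a ≤ dist x y := by
    intro x hx y hy hxy
    have hxL := (hF x hx).1
    have hyL := (hF y hy).1
    have := hmin (x - y) (Submodule.sub_mem L hxL hyL) (sub_ne_zero.2 hxy)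
    rwa [dist_eq_norm]
  have hdisj : (↑F : Set (EuclideanSpace ℝ (Fin 6))).PairwiseDisjoint
      (fun x => Metric.ball x (a / 2)) := by
    intro x hx y hy hxy
    exact Metric.ball_disjoint_ball (by linarith [hsep x hx y hy hxy])
  -- each ball in annulus
  have hsub : ∀ x ∈ F, Metric.ball x (a / 2) ⊆
      Metric.closedBall (0 : EuclideanSpace ℝ (Fin 6)) r₂ \
        Metric.ball (0 : EuclideanSpace ℝ (Fin 6)) r₁ := by
    intro x hx z hz
    have hxM : Real.sqrt M ≤ ‖x‖ := by
      have := Real.sqrt_le_sqrt (hF x hx).2.1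
      rwa [Real.sqrt_sq (norm_nonneg x)] at this
    have hxt : ‖x‖ ≤ Real.sqrt t := by
      have := Real.sqrt_le_sqrt (hF x hx).2.2
      rwa [Real.sqrt_sq (norm_nonneg x)] at this
    rw [Metric.mem_ball] at hz
    constructor
    · rw [Metric.mem_closedBall, dist_zero_right]
      have h1 : ‖z‖ ≤ dist z x + ‖x‖ := by
        simpa [dist_zero_right] using dist_triangle z x 0
      simp only [hr₂def]; linarith
    · intro hmem
      have hmem' : dist z 0 < r₁ := hmem
      rw [dist_zero_right] at hmem' 
      have h2 : ‖x‖ ≤ dist z x + ‖z‖ := by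
        simpa [dist_zero_right, dist_comm x z] using dist_triangle x z 0
      simp only [hr₁def] at hmem'
      linarith
  -- volume computation
  set v := volume (Metric.ball (0 : EuclideanSpace ℝ (Fin 6)) 1) with hv
  have hv0 : v ≠ 0 := (measure_ball_pos volume 0 one_pos).ne'
  have hvtop : v ≠ ⊤ := measure_ball_lt_top.ne
  have hfin : Module.finrank ℝ (EuclideanSpace ℝ (Fin 6)) = 6 := finrank_euclideanSpace_fin
  have hkey : (F.card : ℝ≥0∞) * ENNReal.ofReal ((a/2)^6) * v ≤ ENNReal.ofReal (r₂^6 - r₁^6) * v := by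
    calc (F.card : ℝ≥0∞) * ENNReal.ofReal ((a/2)^6) * v
        = ∑ x ∈ F, volume (Metric.ball x (a/2)) := by
          rw [Finset.sum_congr rfl (fun x _ => by
            rw [Measure.addHaar_ball volume x ha2.le, hfin, ← hv])]
          rw [Finset.sum_const, nsmul_eq_mul, mul_assoc]
      _ = volume (⋃ x ∈ F, Metric.ball x (a/2)) :=
          (measure_biUnion_finset hdisj (fun _ _ => measurableSet_ball)).symm
      _ ≤ volume (Metric.closedBall (0 : EuclideanSpace ℝ (Fin 6)) r₂ \
            Metric.ball (0 : EuclideanSpace ℝ (Fin 6)) r₁) :=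
          measure_mono (Set.iUnion₂_subset hsub)
      _ = volume (Metric.closedBall (0 : EuclideanSpace ℝ (Fin 6)) r₂)
            - volume (Metric.ball (0 : EuclideanSpace ℝ (Fin 6)) r₁) := by
          apply measure_diff ((Metric.ball_subset_ball hr12).trans Metric.ball_subset_closedBall)
            measurableSet_ball.nullMeasurableSet measure_ball_lt_top.ne
      _ = ENNReal.ofReal (r₂^6) * v - ENNReal.ofReal (r₁^6) * v := by
          rw [Measure.addHaar_closedBall volume _ hr₂0, Measure.addHaar_ball volume _ hr₁0, hfin, ← hv]
      _ = (ENNReal.ofReal (r₂^6) - ENNReal.ofReal (r₁^6)) * v := by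
          rw [ENNReal.sub_mul (fun _ _ => hvtop)]
      _ = ENNReal.ofReal (r₂^6 - r₁^6) * v := by
          rw [ENNReal.ofReal_sub _ (pow_nonneg hr₁0 6)]
  have hkey2 : (F.card : ℝ) * (a/2)^6 ≤ r₂^6 - r₁^6 := by
    have h1 := (ENNReal.mul_le_mul_iff_left hv0 hvtop).mp hkey
    rw [← ENNReal.ofReal_natCast, ← ENNReal.ofReal_mul (by positivity)] at h1
    exact (ENNReal.ofReal_le_ofReal_iff (by nlinarith [pow_le_pow_left₀ hr₁0 hr12 6])).mp h1
  have e₂ : r₂ = (a/2) * (2 * Real.sqrt t / a + 1) := by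
    simp only [hr₂def]; field_simp
  have e₁ : r₁ = (a/2) * (2 * Real.sqrt M / a - 1) := by
    simp only [hr₁def]; field_simp
  rw [e₁, e₂, mul_pow, mul_pow] at hkey2
  have hpow : (0:ℝ) < (a/2)^6 := by positivity
  nlinarith [hkey2]

lemma integral_exp_aux {ξ : ℝ} (hξ : 0 < ξ) (b : ℝ) :
    ∫ t in Set.Ioi b, Real.exp (-ξ * t) = Real.exp (-ξ * b) / ξ := by
  have hderiv : ∀ x ∈ Set.Ioi b, HasDerivAt (fun t => -Real.exp (-ξ * t) / ξ)
      (Real.exp (-ξ * x)) x := by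
    intro x _
    have h1 : HasDerivAt (fun t : ℝ => -ξ * t) (-ξ) x := by
      simpa using (hasDerivAt_id x).const_mul (-ξ)
    have h3 : HasDerivAt (fun t => -Real.exp (-ξ * t) / ξ) (-(Real.exp (-ξ * x) * -ξ) / ξ) x :=
      (h1.exp.neg).div_const ξ
    have he : -(Real.exp (-ξ * x) * -ξ) / ξ = Real.exp (-ξ * x) := by field_simp
    rwa [he] at h3
  have hcont : ContinuousWithinAt (fun t => -Real.exp (-ξ * t) / ξ) (Set.Ici b) b :=
    (((Real.continuous_exp.comp (continuous_const.mul continuous_id)).neg.div_const ξ)).continuousWithinAt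
  have htend : Tendsto (fun t => -Real.exp (-ξ * t) / ξ) atTop (𝓝 0) := by
    have : Tendsto (fun x : ℝ => -Real.exp (-ξ * x) / ξ) atTop (𝓝 (-0 / ξ)) :=
      Tendsto.div_const (Tendsto.neg (Real.tendsto_exp_atBot.comp
        (tendsto_id.const_mul_atTop_of_neg (neg_neg_iff_pos.2 hξ)))) ξ
    simpa using this
  have := integral_Ioi_of_hasDerivAt_of_tendsto hcont hderiv
    (exp_neg_integrableOn_Ioi b hξ) htend
  rw [this]; ring

lemma tendsto_aux {a c : ℝ} (ha : 0 < a) (hc : 0 < c) :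
    Tendsto (fun t : ℝ => (2 * Real.sqrt t / a + 1) ^ 6 * Real.exp (-c * t)) atTop (𝓝 0) := by
  have h6 : ∀ x : ℝ, x ^ (6:ℝ) = x ^ (6:ℕ) := fun x => by
    rw [show (6:ℝ) = ((6:ℕ):ℝ) by norm_num, Real.rpow_natCast]
  have h0'' : Tendsto (fun t : ℝ => t ^ (6:ℕ) * Real.exp (-c * t)) atTop (𝓝 0) :=
    (tendsto_rpow_mul_exp_neg_mul_atTop_nhds_zero 6 c hc).congr (fun t => by rw [h6 t])
  have hupper : Tendsto (fun t : ℝ => (2/a + 1)^6 * (t ^ (6:ℕ) * Real.exp (-c * t)))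
      atTop (𝓝 0) := by
    simpa using h0''.const_mul ((2/a+1)^6)
  apply tendsto_of_tendsto_of_tendsto_of_le_of_le' tendsto_const_nhds hupper
  · filter_upwards [eventually_ge_atTop (1:ℝ)] with t ht
    have h0 : (0:ℝ) ≤ 2 * Real.sqrt t / a + 1 := by positivity
    positivity
  · filter_upwards [eventually_ge_atTop (1:ℝ)] with t ht
    have ht0 : (0:ℝ) ≤ t := by linarith
    have hst : Real.sqrt t ≤ t := by
      nlinarith [Real.sq_sqrt ht0, Real.sqrt_nonneg t, sq_nonneg (Real.sqrt t - 1)]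
    have hbase : 2 * Real.sqrt t / a + 1 ≤ (2/a + 1) * t := by
      have h1 : 2 * Real.sqrt t / a ≤ 2 * t / a := by gcongr
      have : (2/a + 1) * t = 2 * t / a + t := by ring
      rw [this]; linarith
    have h0 : (0:ℝ) ≤ 2 * Real.sqrt t / a + 1 := by positivity
    have := pow_le_pow_left₀ h0 hbase 6
    rw [mul_pow] at this
    calc (2 * Real.sqrt t / a + 1) ^ 6 * Real.exp (-c * t)
        ≤ ((2/a+1)^6 * t^6) * Real.exp (-c * t) := by
          exact mul_le_mul_of_nonneg_right this (Real.exp_pos _).le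
      _ = (2/a+1)^6 * (t^6 * Real.exp (-c*t)) := by ring

lemma integrable_aux {a ξ : ℝ} (ha : 0 < a) (hξ : 0 < ξ) (M c : ℝ) :
    IntegrableOn (fun t => ((2 * Real.sqrt t / a + 1) ^ 6 - c) * Real.exp (-ξ * t))
      (Set.Ici M) := by
  have hcont : ContinuousOn (fun t => (2 * Real.sqrt t / a + 1) ^ 6 * Real.exp (-ξ * t))
      (Set.Ici M) := by
    apply Continuous.continuousOn
    exact (((((continuous_const.mul Real.continuous_sqrt).div_const a).add
      continuous_const).pow 6)).mul (Real.continuous_exp.comp (continuous_const.mul continuous_id))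
  have hbig : (fun t => (2 * Real.sqrt t / a + 1) ^ 6 * Real.exp (-ξ * t)) =O[atTop]
      fun t => Real.exp (-(ξ/2) * t) := by
    have h1 : (fun t : ℝ => (2 * Real.sqrt t / a + 1) ^ 6 * Real.exp (-(ξ/2) * t)) =O[atTop]
        (fun _ : ℝ => (1:ℝ)) := (tendsto_aux ha (half_pos hξ)).isBigO_one ℝ
    have h2 := h1.mul (Asymptotics.isBigO_refl (fun t : ℝ => Real.exp (-(ξ/2) * t)) atTop)
    have heq : ∀ t : ℝ, (2 * Real.sqrt t / a + 1) ^ 6 * Real.exp (-(ξ/2) * t) *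
        Real.exp (-(ξ/2) * t) = (2 * Real.sqrt t / a + 1) ^ 6 * Real.exp (-ξ * t) := by
      intro t
      rw [mul_assoc, ← Real.exp_add]
      ring_nf
    exact h2.congr' (Filter.Eventually.of_forall heq)
      (Filter.Eventually.of_forall fun t => one_mul _)
  have hmain : IntegrableOn (fun t => (2 * Real.sqrt t / a + 1) ^ 6 * Real.exp (-ξ * t))
      (Set.Ici M) :=
    Iff.mpr integrableOn_Ici_iff_integrableOn_Ioi
      (integrable_of_isBigO_exp_neg (half_pos hξ) hcont hbig)
  have hc : IntegrableOn (fun t => c * Real.exp (-ξ * t)) (Set.Ici M) :=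
    (Iff.mpr integrableOn_Ici_iff_integrableOn_Ioi (exp_neg_integrableOn_Ioi M hξ)).const_mul c
  simpa [sub_mul, Pi.sub_def] using hmain.sub hc
theorem stmt_8 (L : Submodule ℤ (EuclideanSpace ℝ (Fin 6))) (a ξ M : ℝ)
    (ha : 0 < a) (hmin : ∀ x ∈ L, x ≠ 0 → a ≤ ‖x‖) (hξ : 0 < ξ) (hM : a ^ 2 ≤ M) :
    ∑' x : {x : EuclideanSpace ℝ (Fin 6) // x ∈ L ∧ M ≤ ‖x‖ ^ 2},
        Real.exp (-ξ * ‖(x : EuclideanSpace ℝ (Fin 6))‖ ^ 2) ≤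
      ξ * ∫ t in Set.Ici M,
        ((2 * Real.sqrt t / a + 1) ^ 6 - (2 * Real.sqrt M / a - 1) ^ 6) * Real.exp (-ξ * t) := by
  classical
  have haM : a ≤ Real.sqrt M := by
    rw [show a = Real.sqrt (a^2) by rw [Real.sqrt_sq ha.le]]
    exact Real.sqrt_le_sqrt hM
  have hB0 : (0:ℝ) ≤ 2 * Real.sqrt M / a - 1 := by
    have : (1:ℝ) ≤ 2 * Real.sqrt M / a := by
      rw [le_div_iff₀ ha]; nlinarith
    linarith
  set g : ℝ → ℝ := fun t =>
    ((2 * Real.sqrt t / a + 1) ^ 6 - (2 * Real.sqrt M / a - 1) ^ 6) * Real.exp (-ξ * t) with hg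
  have hgnn : ∀ t ∈ Set.Ici M, 0 ≤ g t := by
    intro t ht
    have hMt : Real.sqrt M ≤ Real.sqrt t := Real.sqrt_le_sqrt ht
    have hbase : 2 * Real.sqrt M / a - 1 ≤ 2 * Real.sqrt t / a + 1 := by
      have : 2 * Real.sqrt M / a ≤ 2 * Real.sqrt t / a := by gcongr
      linarith
    have := pow_le_pow_left₀ hB0 hbase 6
    exact mul_nonneg (by linarith) (Real.exp_pos _).le
  have hgint : IntegrableOn g (Set.Ici M) := integrable_aux ha hξ M _
  have hRnn : 0 ≤ ξ * ∫ t in Set.Ici M, g t :=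
    mul_nonneg hξ.le (setIntegral_nonneg measurableSet_Ici hgnn)
  apply tsum_le_of_sum_le' hRnn
  intro F
  set e : ℝ → ℝ := fun t => Real.exp (-ξ * t) with he
  have hint_e : IntegrableOn e (Set.Ici M) :=
    Iff.mpr integrableOn_Ici_iff_integrableOn_Ioi (exp_neg_integrableOn_Ioi M hξ)
  set f : {x : EuclideanSpace ℝ (Fin 6) // x ∈ L ∧ M ≤ ‖x‖ ^ 2} → ℝ → ℝ :=
    fun x t => (Set.Ici (‖(x : EuclideanSpace ℝ (Fin 6))‖^2)).indicator e t with hf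
  have hfint : ∀ x, IntegrableOn (f x) (Set.Ici M) := fun x =>
    hint_e.indicator measurableSet_Ici
  have hfval : ∀ x, ∫ t in Set.Ici M, f x t
      = Real.exp (-ξ * ‖(x : EuclideanSpace ℝ (Fin 6))‖^2) / ξ := by
    intro x
    simp only [hf]
    rw [setIntegral_indicator measurableSet_Ici,
      Set.inter_eq_right.mpr (Set.Ici_subset_Ici.mpr x.2.2),
      integral_Ici_eq_integral_Ioi, integral_exp_aux hξ]
  have hsum_eq : ∑ x ∈ F, Real.exp (-ξ * ‖(x : EuclideanSpace ℝ (Fin 6))‖^2)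
      = ξ * ∫ t in Set.Ici M, ∑ x ∈ F, f x t := by
    rw [integral_finset_sum F (fun x _ => hfint x), Finset.mul_sum]
    refine Finset.sum_congr rfl (fun x _ => ?_)
    rw [hfval x]
    field_simp
  rw [hsum_eq]
  apply mul_le_mul_of_nonneg_left _ hξ.le
  apply integral_mono_of_nonneg
  · refine Filter.Eventually.of_forall fun t => Finset.sum_nonneg fun x _ => ?_
    exact Set.indicator_nonneg (f := e) (fun s _ => (Real.exp_pos _).le) t
  · exact hgint
  · filter_upwards [ae_restrict_mem measurableSet_Ici] with t ht
    have ht' : M ≤ t := ht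
    set P : {x : EuclideanSpace ℝ (Fin 6) // x ∈ L ∧ M ≤ ‖x‖ ^ 2} → Prop :=
      fun x => ‖(x : EuclideanSpace ℝ (Fin 6))‖^2 ≤ t with hP
    have hsum : ∑ x ∈ F, f x t = ((F.filter P).card : ℝ) * e t := by
      rw [← Finset.sum_filter_add_sum_filter_not F P]
      have h1 : ∀ x ∈ F.filter P, f x t = e t := by
        intro x hx
        exact Set.indicator_of_mem (Set.mem_Ici.mpr (Finset.mem_filter.mp hx).2) e
      have h2 : ∀ x ∈ F.filter (fun x => ¬ P x), f x t = 0 := by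
        intro x hx
        exact Set.indicator_of_notMem (fun hmem =>
          (Finset.mem_filter.mp hx).2 (Set.mem_Ici.mp hmem)) e
      rw [Finset.sum_congr rfl h1, Finset.sum_congr rfl h2, Finset.sum_const,
        Finset.sum_const, nsmul_eq_mul, smul_zero, add_zero]
    have hcard : ((F.filter P).card : ℝ)
        ≤ (2 * Real.sqrt t / a + 1) ^ 6 - (2 * Real.sqrt M / a - 1) ^ 6 := by
      rw [← Finset.card_image_of_injective (F.filter P) Subtype.val_injective]
      apply packing_card L ha hmin hM ht'
      intro y hy
      obtain ⟨x, hx, rfl⟩ := Finset.mem_image.mp hy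
      exact ⟨x.2.1, x.2.2, (Finset.mem_filter.mp hx).2⟩
    calc ∑ x ∈ F, f x t = ((F.filter P).card : ℝ) * e t := hsum
      _ ≤ ((2 * Real.sqrt t / a + 1) ^ 6 - (2 * Real.sqrt M / a - 1) ^ 6) * e t :=
          mul_le_mul_of_nonneg_right hcard (Real.exp_pos _).le
      _ = g t := rfl
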